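/- Let (T_p)_{p∈ℤ} ⊆ ℝ[Z,W] be defined by T₀ = 3, T₁ = 3Z, T₂ = 9Z² − 6W and T_{p+3} = 3Z·T_{p+2} − 3W·T_{p+1} + T_p for all p ∈ ℤ. Then for every λ ∈ ℝ and every integer p ≥ 1, L_λ T_p = −(p/2)((3 − λ)p + 3(λ − 1)) T_p − ((λ − 1)p/2) Σ_{i=1}^{p−1} T_i T_{p−i}. Equivalently, writing λ = (6α+5)/2, L_λ T_p = −(p/4)(p(1 − 6α) + 9(2α + 1)) T_p − (3p/4)(2α + 1) Σ_{i=1}^{p−1} T_i T_{p−i}. -/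
import Mathlib


noncomputable section

open MvPolynomial

/-- The deltoid operator `L_λ` on `ℝ[Z,W]`, with `Z = X 0` and `W = X 1`. -/
def Lop (lam : ℝ) (f : MvPolynomial (Fin 2) ℝ) : MvPolynomial (Fin 2) ℝ :=
  (X 1 - (X 0) ^ 2) * pderiv 0 (pderiv 0 f)
    + (1 - X 0 * X 1) * pderiv 0 (pderiv 1 f)
    + (X 0 - (X 1) ^ 2) * pderiv 1 (pderiv 1 f)
    - C lam * X 0 * pderiv 0 f
    - C lam * X 1 * pderiv 1 f


noncomputable def dh : ℕ → MvPolynomial (Fin 2) ℝ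
  | 0 => 1
  | 1 => 0
  | 2 => 0
  | (n+3) => 3 * X 0 * dh (n+2) - 3 * X 1 * dh (n+1) + dh n

lemma dh_rec (n : ℕ) : dh (n+3) = 3 * X 0 * dh (n+2) - 3 * X 1 * dh (n+1) + dh n := rfl

lemma pderiv_ofNat' (i : Fin 2) (n : ℕ) [n.AtLeastTwo] :
    pderiv i (no_index (OfNat.ofNat n) : MvPolynomial (Fin 2) ℝ) = 0 := by
  rw [← map_ofNat (C : ℝ →+* MvPolynomial (Fin 2) ℝ) n]; exact pderiv_C

lemma pd01 : pderiv (0 : Fin 2) (X 1 : MvPolynomial (Fin 2) ℝ) = 0 := pderiv_X_of_ne (by decide)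
lemma pd10 : pderiv (1 : Fin 2) (X 0 : MvPolynomial (Fin 2) ℝ) = 0 := pderiv_X_of_ne (by decide)

lemma threeStep {Q : ℕ → Prop} (h0 : Q 0) (h1 : Q 1) (h2 : Q 2)
    (step : ∀ n, Q n → Q (n+1) → Q (n+2) → Q (n+3)) : ∀ n, Q n := by
  have key : ∀ n, Q n ∧ Q (n+1) ∧ Q (n+2) := by
    intro n
    induction n with
    | zero => exact ⟨h0, h1, h2⟩
    | succ k ih => exact ⟨ih.2.1, ih.2.2, step k ih.1 ih.2.1 ih.2.2⟩
  exact fun n => (key n).1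

lemma sum_top (b : ℤ) (f : ℤ → MvPolynomial (Fin 2) ℝ) (hb : 0 ≤ b) :
    ∑ i ∈ Finset.Icc (1:ℤ) (b+1), f i = (∑ i ∈ Finset.Icc (1:ℤ) b, f i) + f (b+1) := by
  have h : Finset.Icc (1:ℤ) (b+1) = insert (b+1) (Finset.Icc 1 b) := by
    ext x; simp only [Finset.mem_Icc, Finset.mem_insert]; omega
  rw [h, Finset.sum_insert (by simp only [Finset.mem_Icc]; omega)]
  ring

lemma Lkey (lam : ℝ) (f g h : MvPolynomial (Fin 2) ℝ) :
    Lop lam (3 * X 0 * f - 3 * X 1 * g + h)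
      = 3 * X 0 * Lop lam f - 3 * X 1 * Lop lam g + Lop lam h
        - 3 * C lam * X 0 * f + 3 * C lam * X 1 * g
        + 3 * (2 * (X 1 - (X 0)^2) * pderiv 0 f + (1 - X 0 * X 1) * pderiv 1 f)
        - 3 * ((1 - X 0 * X 1) * pderiv 0 g + 2 * (X 0 - (X 1)^2) * pderiv 1 g) := by
  simp only [Lop, map_add, map_sub, pderiv_mul, pderiv_X_self, pd01, pd10, pderiv_ofNat',
    mul_zero, zero_mul, add_zero, zero_add, mul_one]
  ring
lemma TN2 (T : ℤ → MvPolynomial (Fin 2) ℝ)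
    (hT0 : T 0 = 3) (hT1 : T 1 = 3 * X 0) (hT2 : T 2 = 9 * (X 0) ^ 2 - 6 * X 1)
    (hrec : ∀ p : ℤ, T (p + 3) = 3 * X 0 * T (p + 2) - 3 * X 1 * T (p + 1) + T p) :
    ∀ n : ℕ, T n = 3 * X 0 * dh (n+2) - 6 * X 1 * dh (n+1) + 3 * dh n := by
  refine threeStep ?_ ?_ ?_ ?_
  · norm_num [hT0, dh]
  · norm_num [hT1, dh]
  · norm_num [hT2, dh]; ring
  · intro n ih0 ih1 ih2
    have h := hrec n
    push_cast
    push_cast at ih0 ih1 ih2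
    simp only [show n+1+2 = n+3 from rfl, show n+1+1 = n+2 from rfl, show n+2+2 = n+4 from rfl,
      show n+2+1 = n+3 from rfl, show n+3+2 = n+5 from rfl, show n+3+1 = n+4 from rfl,
      show n+2+3 = n+5 from rfl, show n+1+3 = n+4 from rfl] at *
    have r2 : dh (n+5) = 3 * X 0 * dh (n+4) - 3 * X 1 * dh (n+3) + dh (n+2) := dh_rec (n+2)
    have r1 : dh (n+4) = 3 * X 0 * dh (n+3) - 3 * X 1 * dh (n+2) + dh (n+1) := dh_rec (n+1)
    have r0 : dh (n+3) = 3 * X 0 * dh (n+2) - 3 * X 1 * dh (n+1) + dh n := dh_rec n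
    linear_combination h + 3 * X 0 * ih2 - 3 * X 1 * ih1 + ih0
      - 3 * X 0 * r2 + 6 * X 1 * r1 - 3 * r0

lemma Der (T : ℤ → MvPolynomial (Fin 2) ℝ)
    (hT0 : T 0 = 3) (hT1 : T 1 = 3 * X 0) (hT2 : T 2 = 9 * (X 0) ^ 2 - 6 * X 1)
    (hrec : ∀ p : ℤ, T (p + 3) = 3 * X 0 * T (p + 2) - 3 * X 1 * T (p + 1) + T p) :
    ∀ n : ℕ, pderiv 0 (T n) = 3 * C (n : ℝ) * dh (n+2)
      ∧ pderiv 1 (T n) = -(3 * C (n : ℝ)) * dh (n+1) := by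
  have tn2 := TN2 T hT0 hT1 hT2 hrec
  refine threeStep ?_ ?_ ?_ ?_
  · constructor <;>
      simp [hT0, dh, pderiv_ofNat', pd01, pd10]
  · constructor <;>
      · norm_num [hT1, dh, pderiv_mul, pderiv_ofNat', pd01, pd10, pderiv_X_self, map_one]
  · constructor <;>
      · norm_num [hT2, dh, pderiv_mul, pderiv_pow, pderiv_ofNat', pd01, pd10, pderiv_X_self,
          map_ofNat]
        try ring
  · intro n ih0 ih1 ih2
    have h0 := congrArg (pderiv 0) (hrec n)
    have h1 := congrArg (pderiv 1) (hrec n)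
    simp only [map_add, map_sub, pderiv_mul, pderiv_ofNat', pd01, pd10, pderiv_X_self,
      mul_zero, zero_mul, add_zero, zero_add, mul_one] at h0 h1
    push_cast
    push_cast at ih0 ih1 ih2
    simp only [show n+1+2 = n+3 from rfl, show n+1+1 = n+2 from rfl, show n+2+2 = n+4 from rfl,
      show n+2+1 = n+3 from rfl, show n+3+2 = n+5 from rfl, show n+3+1 = n+4 from rfl,
      map_add, map_ofNat, map_one] at *
    have r2 : dh (n+5) = 3 * X 0 * dh (n+4) - 3 * X 1 * dh (n+3) + dh (n+2) := dh_rec (n+2)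
    have r1 : dh (n+4) = 3 * X 0 * dh (n+3) - 3 * X 1 * dh (n+2) + dh (n+1) := dh_rec (n+1)
    have t2' : T ((n:ℤ)+2) = 3 * X 0 * dh (n+4) - 6 * X 1 * dh (n+3) + 3 * dh (n+2) := by
      have := tn2 (n+2); push_cast at this
      simpa [show n+2+2 = n+4 from rfl, show n+2+1 = n+3 from rfl] using this
    have t1' : T ((n:ℤ)+1) = 3 * X 0 * dh (n+3) - 6 * X 1 * dh (n+2) + 3 * dh (n+1) := by
      have := tn2 (n+1); push_cast at this
      simpa [show n+1+2 = n+3 from rfl, show n+1+1 = n+2 from rfl] using this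
    constructor
    · linear_combination h0 + 3 * X 0 * ih2.1 - 3 * X 1 * ih1.1 + ih0.1 + 3 * t2'
        - (3 * C (n:ℝ) + 9) * r2
    · linear_combination h1 + 3 * X 0 * ih2.2 - 3 * X 1 * ih1.2 + ih0.2 - 3 * t1'
        + (3 * C (n:ℝ) + 9) * r1

lemma G1 (T : ℤ → MvPolynomial (Fin 2) ℝ)
    (hT0 : T 0 = 3) (hT1 : T 1 = 3 * X 0) (hT2 : T 2 = 9 * (X 0) ^ 2 - 6 * X 1)
    (hrec : ∀ p : ℤ, T (p + 3) = 3 * X 0 * T (p + 2) - 3 * X 1 * T (p + 1) + T p) :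
    ∀ n : ℕ, 3 * (2 * (X 1 - (X 0)^2) * dh (n+2) - (1 - X 0 * X 1) * dh (n+1))
      = X 0 * T n - T (n+1) := by
  have h3 := hrec 0
  norm_num at h3
  refine threeStep ?_ ?_ ?_ ?_
  · norm_num [hT0, hT1, dh]; try ring
  · norm_num [hT1, hT2, dh]; try ring
  · norm_num [hT2, h3, hT1, hT0, dh]; try ring
  · intro n ih0 ih1 ih2
    have hn := hrec n
    have hn1 := hrec ((n:ℤ)+1)
    push_cast
    push_cast at ih0 ih1 ih2 hn hn1
    simp only [show n+1+2 = n+3 from rfl, show n+1+1 = n+2 from rfl, show n+2+2 = n+4 from rfl,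
      show n+2+1 = n+3 from rfl, show n+3+2 = n+5 from rfl, show n+3+1 = n+4 from rfl,
      show ((n:ℤ)+1+3 : ℤ) = (n:ℤ)+4 from by ring, show ((n:ℤ)+1+2 : ℤ) = (n:ℤ)+3 from by ring,
      show ((n:ℤ)+1+1 : ℤ) = (n:ℤ)+2 from by ring, show ((n:ℤ)+2+1 : ℤ) = (n:ℤ)+3 from by ring,
      show ((n:ℤ)+2+2 : ℤ) = (n:ℤ)+4 from by ring, show ((n:ℤ)+3+1 : ℤ) = (n:ℤ)+4 from by ring,
      show ((n:ℤ)+2+3 : ℤ) = (n:ℤ)+5 from by ring, show ((n:ℤ)+3+2 : ℤ) = (n:ℤ)+5 from by ring] at *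
    have r2 : dh (n+5) = 3 * X 0 * dh (n+4) - 3 * X 1 * dh (n+3) + dh (n+2) := dh_rec (n+2)
    have r1 : dh (n+4) = 3 * X 0 * dh (n+3) - 3 * X 1 * dh (n+2) + dh (n+1) := dh_rec (n+1)
    linear_combination 3 * X 0 * ih2 - 3 * X 1 * ih1 + ih0
      + 6 * (X 1 - X 0^2) * r2 - 3 * (1 - X 0 * X 1) * r1 - X 0 * hn + hn1

lemma G2 (T : ℤ → MvPolynomial (Fin 2) ℝ)
    (hT0 : T 0 = 3) (hT1 : T 1 = 3 * X 0) (hT2 : T 2 = 9 * (X 0) ^ 2 - 6 * X 1)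
    (hrec : ∀ p : ℤ, T (p + 3) = 3 * X 0 * T (p + 2) - 3 * X 1 * T (p + 1) + T p) :
    ∀ n : ℕ, 3 * ((1 - X 0 * X 1) * dh (n+3) - 2 * (X 0 - (X 1)^2) * dh (n+2))
      = T n - X 1 * T (n+1) := by
  have h3 := hrec 0
  norm_num at h3
  refine threeStep ?_ ?_ ?_ ?_
  · norm_num [hT0, hT1, dh]; try ring
  · norm_num [hT1, hT2, dh]; try ring
  · norm_num [hT2, h3, hT1, hT0, dh]; try ring
  · intro n ih0 ih1 ih2
    have hn := hrec n
    have hn1 := hrec ((n:ℤ)+1)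
    push_cast
    push_cast at ih0 ih1 ih2 hn hn1
    simp only [show n+1+2 = n+3 from rfl, show n+1+1 = n+2 from rfl, show n+2+2 = n+4 from rfl,
      show n+2+1 = n+3 from rfl, show n+3+2 = n+5 from rfl, show n+3+1 = n+4 from rfl,
      show n+1+3 = n+4 from rfl, show n+2+3 = n+5 from rfl, show n+3+3 = n+6 from rfl,
      show ((n:ℤ)+1+3 : ℤ) = (n:ℤ)+4 from by ring, show ((n:ℤ)+1+2 : ℤ) = (n:ℤ)+3 from by ring,
      show ((n:ℤ)+1+1 : ℤ) = (n:ℤ)+2 from by ring, show ((n:ℤ)+2+1 : ℤ) = (n:ℤ)+3 from by ring,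
      show ((n:ℤ)+2+2 : ℤ) = (n:ℤ)+4 from by ring, show ((n:ℤ)+3+1 : ℤ) = (n:ℤ)+4 from by ring,
      show ((n:ℤ)+2+3 : ℤ) = (n:ℤ)+5 from by ring, show ((n:ℤ)+3+2 : ℤ) = (n:ℤ)+5 from by ring] at *
    have r3 : dh (n+6) = 3 * X 0 * dh (n+5) - 3 * X 1 * dh (n+4) + dh (n+3) := dh_rec (n+3)
    have r2 : dh (n+5) = 3 * X 0 * dh (n+4) - 3 * X 1 * dh (n+3) + dh (n+2) := dh_rec (n+2)
    linear_combination 3 * X 0 * ih2 - 3 * X 1 * ih1 + ih0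
      + 3 * (1 - X 0 * X 1) * r3 - 6 * (X 0 - X 1^2) * r2 - hn + X 1 * hn1
lemma Srec (T : ℤ → MvPolynomial (Fin 2) ℝ)
    (hT0 : T 0 = 3) (hT1 : T 1 = 3 * X 0) (hT2 : T 2 = 9 * (X 0) ^ 2 - 6 * X 1)
    (hrec : ∀ p : ℤ, T (p + 3) = 3 * X 0 * T (p + 2) - 3 * X 1 * T (p + 1) + T p)
    (p : ℤ) (hp : 1 ≤ p) :
    (∑ i ∈ Finset.Icc (1:ℤ) (p+2), T i * T (p+3-i))
      = 3 * X 0 * (∑ i ∈ Finset.Icc (1:ℤ) (p+1), T i * T (p+2-i))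
        - 3 * X 1 * (∑ i ∈ Finset.Icc (1:ℤ) p, T i * T (p+1-i))
        + (∑ i ∈ Finset.Icc (1:ℤ) (p-1), T i * T (p-i))
        + 3 * X 0 * T (p+2) - 6 * X 1 * T (p+1) + 3 * T p := by
  have Tm1 : T (-1) = 3 * X 1 := by
    have h := hrec (-1)
    norm_num at h
    rw [hT0, hT1, hT2] at h
    linear_combination -h
  have Tm2 : T (-2) = 9 * (X 1)^2 - 6 * X 0 := by
    have h := hrec (-2)
    norm_num at h
    rw [hT0, hT1, Tm1] at h
    linear_combination -h
  have e1 : (∑ i ∈ Finset.Icc (1:ℤ) (p+2), T i * T (p+3-i))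
      = 3 * X 0 * (∑ i ∈ Finset.Icc (1:ℤ) (p+2), T i * T (p+2-i))
        - 3 * X 1 * (∑ i ∈ Finset.Icc (1:ℤ) (p+2), T i * T (p+1-i))
        + (∑ i ∈ Finset.Icc (1:ℤ) (p+2), T i * T (p-i)) := by
    rw [Finset.mul_sum, Finset.mul_sum, ← Finset.sum_sub_distrib, ← Finset.sum_add_distrib]
    apply Finset.sum_congr rfl
    intro i _
    have h := hrec (p - i)
    rw [show p-i+3 = p+3-i from by ring, show p-i+2 = p+2-i from by ring,
        show p-i+1 = p+1-i from by ring] at h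
    rw [h]; ring
  have s2a := sum_top (p+1) (fun i => T i * T (p+2-i)) (by omega)
  rw [show p+1+1 = p+2 from by ring] at s2a
  simp only [show p+2-(p+2) = (0:ℤ) from by ring, hT0] at s2a
  have s1a := sum_top (p+1) (fun i => T i * T (p+1-i)) (by omega)
  rw [show p+1+1 = p+2 from by ring] at s1a
  simp only [show p+1-(p+2) = (-1:ℤ) from by ring, Tm1] at s1a
  have s1b := sum_top p (fun i => T i * T (p+1-i)) (by omega)
  simp only [show p+1-(p+1) = (0:ℤ) from by ring, hT0] at s1b
  have s0a := sum_top (p+1) (fun i => T i * T (p-i)) (by omega)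
  rw [show p+1+1 = p+2 from by ring] at s0a
  simp only [show p-(p+2) = (-2:ℤ) from by ring, Tm2] at s0a
  have s0b := sum_top p (fun i => T i * T (p-i)) (by omega)
  simp only [show p-(p+1) = (-1:ℤ) from by ring, Tm1] at s0b
  have s0c := sum_top (p-1) (fun i => T i * T (p-i)) (by omega)
  rw [show p-1+1 = p from by ring] at s0c
  simp only [show p-p = (0:ℤ) from by ring, hT0] at s0c
  linear_combination e1 + 3 * X 0 * s2a - 3 * X 1 * s1a - 3 * X 1 * s1b
    + s0a + s0b + s0c
lemma star (T : ℤ → MvPolynomial (Fin 2) ℝ)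
    (hT0 : T 0 = 3) (hT1 : T 1 = 3 * X 0) (hT2 : T 2 = 9 * (X 0) ^ 2 - 6 * X 1)
    (hrec : ∀ p : ℤ, T (p + 3) = 3 * X 0 * T (p + 2) - 3 * X 1 * T (p + 1) + T p) :
    ∀ n : ℕ, 2 * (dh (n+4) - dh (n+1))
      = (3 - C ((n:ℝ)+1)) * T ((n:ℤ)+1)
        + ∑ i ∈ Finset.Icc (1:ℤ) (n:ℤ), T i * T ((n:ℤ)+1-i) := by
  have h3 := hrec 0
  norm_num at h3
  refine threeStep ?_ ?_ ?_ ?_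
  · rw [show Finset.Icc (1:ℤ) ((0:ℕ):ℤ) = ∅ from Finset.Icc_eq_empty (by norm_num),
      Finset.sum_empty]
    norm_num [dh, hT1]
    try ring
  · rw [show Finset.Icc (1:ℤ) ((1:ℕ):ℤ) = {1} from by norm_num [Finset.Icc_self],
      Finset.sum_singleton]
    norm_num [dh, hT1, hT2, map_ofNat]
    ring
  · have e := sum_top 1 (fun i => T i * T (3-i)) (by norm_num)
    norm_num at e
    push_cast
    norm_num
    rw [e]
    norm_num [dh, hT1, hT2, h3, map_ofNat]
    try ring
  · intro n ih0 ih1 ih2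
    have hn1 := hrec ((n:ℤ)+1)
    have srec := Srec T hT0 hT1 hT2 hrec ((n:ℤ)+1) (by omega)
    push_cast
    push_cast at ih0 ih1 ih2 hn1 srec
    simp only [show n+1+4 = n+5 from rfl, show n+1+1 = n+2 from rfl, show n+2+4 = n+6 from rfl,
      show n+2+1 = n+3 from rfl, show n+3+4 = n+7 from rfl, show n+3+1 = n+4 from rfl,
      show ((n:ℤ)+1+3 : ℤ) = (n:ℤ)+4 from by ring, show ((n:ℤ)+1+2 : ℤ) = (n:ℤ)+3 from by ring,
      show ((n:ℤ)+1+1 : ℤ) = (n:ℤ)+2 from by ring, show ((n:ℤ)+2+1 : ℤ) = (n:ℤ)+3 from by ring,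
      show ((n:ℤ)+3+1 : ℤ) = (n:ℤ)+4 from by ring, show ((n:ℤ)+1-1 : ℤ) = (n:ℤ) from by ring,
      show ((n:ℝ)+1+1 : ℝ) = (n:ℝ)+2 from by ring, show ((n:ℝ)+2+1 : ℝ) = (n:ℝ)+3 from by ring,
      show ((n:ℝ)+3+1 : ℝ) = (n:ℝ)+4 from by ring,
      map_add, map_ofNat, map_one] at *
    have r4 : dh (n+7) = 3 * X 0 * dh (n+6) - 3 * X 1 * dh (n+5) + dh (n+4) := dh_rec (n+4)
    have r1 : dh (n+4) = 3 * X 0 * dh (n+3) - 3 * X 1 * dh (n+2) + dh (n+1) := dh_rec (n+1)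
    linear_combination 3 * X 0 * ih2 - 3 * X 1 * ih1 + ih0 + 2 * r4 - 2 * r1 - srec
      + (C (n:ℝ) + 1) * hn1

lemma I1 (lam : ℝ) (T : ℤ → MvPolynomial (Fin 2) ℝ)
    (hT0 : T 0 = 3) (hT1 : T 1 = 3 * X 0) (hT2 : T 2 = 9 * (X 0) ^ 2 - 6 * X 1)
    (hrec : ∀ p : ℤ, T (p + 3) = 3 * X 0 * T (p + 2) - 3 * X 1 * T (p + 1) + T p) :
    ∀ n : ℕ, Lop lam (T n)
      = -(C (n:ℝ))^2 * T n + (1 - C lam) * C (n:ℝ) * (dh (n+3) - dh n) := by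
  have der := Der T hT0 hT1 hT2 hrec
  have g1 := G1 T hT0 hT1 hT2 hrec
  have g2 := G2 T hT0 hT1 hT2 hrec
  have tn2 := TN2 T hT0 hT1 hT2 hrec
  refine threeStep ?_ ?_ ?_ ?_
  · norm_num [Lop, hT0, dh, pderiv_ofNat', pd01, pd10]
  · norm_num [Lop, hT1, dh, pderiv_mul, pderiv_ofNat', pd01, pd10, pderiv_X_self, map_one]
    ring
  · norm_num [Lop, hT2, dh, pderiv_mul, pderiv_pow, pderiv_ofNat', pd01, pd10, pderiv_X_self,
      map_ofNat]
    ring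
  · intro n ih0 ih1 ih2
    have ht := hrec n
    rw [show ((n+3:ℕ):ℤ) = (n:ℤ)+3 from by push_cast; ring, ht, Lkey]
    have hg1 : 2 * (X 1 - (X 0)^2) * pderiv 0 (T ((n:ℤ)+2))
        + (1 - X 0 * X 1) * pderiv 1 (T ((n:ℤ)+2))
        = C ((n:ℝ)+2) * (X 0 * T ((n:ℤ)+2) - T ((n:ℤ)+3)) := by
      have d := der (n+2)
      have g := g1 (n+2)
      push_cast at d g
      simp only [show n+2+2 = n+4 from rfl, show n+2+1 = n+3 from rfl,
        show ((n:ℤ)+2+1 : ℤ) = (n:ℤ)+3 from by ring, map_add, map_ofNat] at d g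
      simp only [map_add, map_ofNat]
      linear_combination 2 * (X 1 - (X 0)^2) * d.1 + (1 - X 0 * X 1) * d.2
        + (C (n:ℝ) + 2) * g
    have hg2 : (1 - X 0 * X 1) * pderiv 0 (T ((n:ℤ)+1))
        + 2 * (X 0 - (X 1)^2) * pderiv 1 (T ((n:ℤ)+1))
        = C ((n:ℝ)+1) * (T (n:ℤ) - X 1 * T ((n:ℤ)+1)) := by
      have d := der (n+1)
      have g := g2 n
      push_cast at d g
      simp only [show n+1+2 = n+3 from rfl, show n+1+1 = n+2 from rfl,
        map_add, map_one] at d g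
      simp only [map_add, map_one]
      linear_combination (1 - X 0 * X 1) * d.1 + 2 * (X 0 - (X 1)^2) * d.2
        + (C (n:ℝ) + 1) * g
    have t3' := tn2 (n+3)
    have t0 := tn2 n
    push_cast at ih0 ih1 ih2 ht t3' t0
    push_cast
    simp only [show n+1+3 = n+4 from rfl, show n+1+1 = n+2 from rfl, show n+2+3 = n+5 from rfl,
      show n+2+1 = n+3 from rfl, show n+3+3 = n+6 from rfl, show n+3+1 = n+4 from rfl,
      show n+3+2 = n+5 from rfl,
      show ((n:ℝ)+1+1 : ℝ) = (n:ℝ)+2 from by ring, show ((n:ℝ)+2+1 : ℝ) = (n:ℝ)+3 from by ring,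
      map_add, map_ofNat, map_one] at *
    have r3 : dh (n+6) = 3 * X 0 * dh (n+5) - 3 * X 1 * dh (n+4) + dh (n+3) := dh_rec (n+3)
    have r0 : dh (n+3) = 3 * X 0 * dh (n+2) - 3 * X 1 * dh (n+1) + dh n := dh_rec n
    rw [hg1, hg2]
    linear_combination 3 * X 0 * ih2 - 3 * X 1 * ih1 + ih0
      + (C lam - 3 * C (n:ℝ) - 7) * ht + (1 - C lam) * t3' - (1 - C lam) * t0
      - (1 - C lam) * (C (n:ℝ) + 3) * r3 + (1 - C lam) * (C (n:ℝ) + 3) * r0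

theorem stmt_11 (lam : ℝ) (T : ℤ → MvPolynomial (Fin 2) ℝ)
    (hT0 : T 0 = 3) (hT1 : T 1 = 3 * X 0) (hT2 : T 2 = 9 * (X 0) ^ 2 - 6 * X 1)
    (hrec : ∀ p : ℤ, T (p + 3) = 3 * X 0 * T (p + 2) - 3 * X 1 * T (p + 1) + T p) :
    ∀ p : ℤ, 1 ≤ p →
      (Lop lam (T p)
        = C (-((p : ℝ) / 2) * ((3 - lam) * p + 3 * (lam - 1))) * T p
          + C (-((lam - 1) * p / 2)) * ∑ i ∈ Finset.Icc (1 : ℤ) (p - 1), T i * T (p - i)) ∧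
      (∀ α : ℝ, lam = (6 * α + 5) / 2 →
        Lop lam (T p)
          = C (-((p : ℝ) / 4) * (p * (1 - 6 * α) + 9 * (2 * α + 1))) * T p
            + C (-(3 * (p : ℝ) / 4 * (2 * α + 1))) *
                ∑ i ∈ Finset.Icc (1 : ℤ) (p - 1), T i * T (p - i)) := by
  intro p hp
  obtain ⟨n, hn⟩ : ∃ n : ℕ, p = (n:ℤ) + 1 := ⟨(p-1).toNat, by omega⟩
  subst hn
  have hI := I1 lam T hT0 hT1 hT2 hrec (n+1)
  have hs := star T hT0 hT1 hT2 hrec n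
  push_cast at hI hs ⊢
  simp only [show n+1+3 = n+4 from rfl, show n+1+1 = n+2 from rfl, map_add, map_one] at hI hs
  have h2 : (2 : MvPolynomial (Fin 2) ℝ) ≠ 0 := by
    rw [show (2 : MvPolynomial (Fin 2) ℝ) = C 2 from (map_ofNat _ 2).symm]
    simp
  have part1 : Lop lam (T ((n:ℤ) + 1))
      = C (-(((n:ℝ)+1) / 2) * ((3 - lam) * ((n:ℝ)+1) + 3 * (lam - 1))) * T ((n:ℤ)+1)
        + C (-((lam - 1) * ((n:ℝ)+1) / 2)) *
            ∑ i ∈ Finset.Icc (1 : ℤ) ((n:ℤ)+1-1), T i * T ((n:ℤ)+1-i) := by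
    apply mul_left_cancel₀ h2
    have hc : (2 : MvPolynomial (Fin 2) ℝ)
          * C (-(((n:ℝ)+1) / 2) * ((3 - lam) * ((n:ℝ)+1) + 3 * (lam - 1)))
        = -(C (n:ℝ) + 1) * ((3 - C lam) * (C (n:ℝ) + 1) + 3 * (C lam - 1)) := by
      rw [show (2 : MvPolynomial (Fin 2) ℝ) = C 2 from (map_ofNat _ 2).symm, ← map_mul]
      rw [show (2:ℝ) * (-(((n:ℝ)+1) / 2) * ((3 - lam) * ((n:ℝ)+1) + 3 * (lam - 1)))
          = -((n:ℝ)+1) * ((3 - lam) * ((n:ℝ)+1) + 3 * (lam - 1)) from by ring]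
      simp only [map_add, map_mul, map_sub, map_neg, map_ofNat, map_one]
    have hd : (2 : MvPolynomial (Fin 2) ℝ) * C (-((lam - 1) * ((n:ℝ)+1) / 2))
        = -((C lam - 1) * (C (n:ℝ) + 1)) := by
      rw [show (2 : MvPolynomial (Fin 2) ℝ) = C 2 from (map_ofNat _ 2).symm, ← map_mul]
      rw [show (2:ℝ) * (-((lam - 1) * ((n:ℝ)+1) / 2)) = -((lam - 1) * ((n:ℝ)+1)) from by ring]
      simp only [map_add, map_mul, map_sub, map_neg, map_one]
    rw [show ((n:ℤ)+1-1 : ℤ) = (n:ℤ) from by ring]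
    linear_combination 2 * hI + (1 - C lam) * (C (n:ℝ) + 1) * hs
      - T ((n:ℤ)+1) * hc
      - (∑ i ∈ Finset.Icc (1 : ℤ) (n:ℤ), T i * T ((n:ℤ)+1-i)) * hd
  constructor
  · exact part1
  · intro a ha
    subst ha
    have e1 : (-(((n:ℝ)+1) / 2) * ((3 - (6*a+5)/2) * ((n:ℝ)+1) + 3 * ((6*a+5)/2 - 1)))
        = (-(((n:ℝ)+1) / 4) * (((n:ℝ)+1) * (1 - 6 * a) + 9 * (2 * a + 1))) := by ring
    have e2 : (-(((6*a+5)/2 - 1) * ((n:ℝ)+1) / 2))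
        = (-(3 * ((n:ℝ)+1) / 4 * (2 * a + 1))) := by ring
    rw [← e1, ← e2]
    exact part1
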